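/- Equation for second derivatives of a solution: let u be a smooth solution of σ₂(D²u) = (1/2)[(Δu)² − |D²u|²] = 1 on an open set Ω ⊂ ℝⁿ with F_{ij} = Δu·δ_{ij} − u_{ij}. Then for all indices i, j and all x ∈ Ω, Σ_{α,β} F_{αβ}(x) ∂_{αβ}(∂_{ij}u)(x) = Σ_{α≠β} [ ∂_{iαβ}u · ∂_{jαβ}u − ∂_{iββ}u · ∂_{jαα}u ](x). -/

import Mathlib

open Metric Real

noncomputable def pd {n : ℕ} (u : EuclideanSpace ℝ (Fin n) → ℝ)
    (x : EuclideanSpace ℝ (Fin n)) (i : Fin n) : ℝ :=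
  fderiv ℝ u x (EuclideanSpace.single i 1)

noncomputable def pd2 {n : ℕ} (u : EuclideanSpace ℝ (Fin n) → ℝ)
    (x : EuclideanSpace ℝ (Fin n)) (i j : Fin n) : ℝ :=
  pd (fun y => pd u y j) x i

noncomputable def pd3 {n : ℕ} (u : EuclideanSpace ℝ (Fin n) → ℝ)
    (x : EuclideanSpace ℝ (Fin n)) (i j k : Fin n) : ℝ :=
  pd (fun y => pd2 u y j k) x i

/-- The Hessian matrix of second partial derivatives. -/
noncomputable def hess {n : ℕ} (u : EuclideanSpace ℝ (Fin n) → ℝ)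
    (x : EuclideanSpace ℝ (Fin n)) : Matrix (Fin n) (Fin n) ℝ :=
  Matrix.of fun i j => pd2 u x i j

/-- The sigma-2 polynomial of a matrix: half of (trace squared minus Frobenius norm squared). -/
noncomputable def sigma2M {n : ℕ} (H : Matrix (Fin n) (Fin n) ℝ) : ℝ :=
  ((∑ i, H i i) ^ 2 - ∑ i, ∑ j, (H i j) ^ 2) / 2

/-- Coefficients of the linearized operator of the sigma-2 equation. -/
noncomputable def Fcoef {n : ℕ} (u : EuclideanSpace ℝ (Fin n) → ℝ)
    (x : EuclideanSpace ℝ (Fin n)) (i j : Fin n) : ℝ :=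
  (∑ k, pd2 u x k k) * (if i = j then 1 else 0) - pd2 u x i j

/-- The largest eigenvalue of a (symmetric) matrix. -/
noncomputable def lambdaMax {n : ℕ} (M : Matrix (Fin n) (Fin n) ℝ) : ℝ :=
  sSup {r : ℝ | ∃ v : Fin n → ℝ, v ≠ 0 ∧ M.mulVec v = r • v}
section Aux

variable {n : ℕ} {Ω : Set (EuclideanSpace ℝ (Fin n))}
  {u f g : EuclideanSpace ℝ (Fin n) → ℝ} {x : EuclideanSpace ℝ (Fin n)}

lemma smooth_pd (hΩ : IsOpen Ω) (hu : ContDiffOn ℝ (⊤ : ℕ∞) u Ω) (a : Fin n) :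
    ContDiffOn ℝ (⊤ : ℕ∞) (fun y => pd u y a) Ω :=
  (hu.fderiv_of_isOpen hΩ (le_of_eq rfl)).clm_apply contDiffOn_const

lemma dAt (hΩ : IsOpen Ω) (hu : ContDiffOn ℝ (⊤ : ℕ∞) u Ω) (hx : x ∈ Ω) :
    DifferentiableAt ℝ u x :=
  (hu.contDiffAt (hΩ.mem_nhds hx)).differentiableAt (by simp)

lemma pd_congr (hΩ : IsOpen Ω) (hx : x ∈ Ω) (h : ∀ y ∈ Ω, f y = g y) (a : Fin n) :
    pd f x a = pd g x a := by
  unfold pd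
  rw [Filter.EventuallyEq.fderiv_eq (Filter.eventuallyEq_of_mem (hΩ.mem_nhds hx) h)]

lemma pd_const_on (hΩ : IsOpen Ω) (hx : x ∈ Ω) (c : ℝ) (h : ∀ y ∈ Ω, f y = c) (a : Fin n) :
    pd f x a = 0 := by
  rw [pd_congr hΩ hx (g := fun _ => c) h a]
  unfold pd
  rw [fderiv_fun_const]
  simp

lemma pd_mul (hf : DifferentiableAt ℝ f x) (hg : DifferentiableAt ℝ g x) (a : Fin n) :
    pd (fun y => f y * g y) x a = pd f x a * g x + f x * pd g x a := by
  unfold pd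
  rw [fderiv_fun_mul hf hg]
  simp; ring

lemma pd_sub (hf : DifferentiableAt ℝ f x) (hg : DifferentiableAt ℝ g x) (a : Fin n) :
    pd (fun y => f y - g y) x a = pd f x a - pd g x a := by
  unfold pd
  rw [fderiv_fun_sub hf hg]
  simp

lemma pd_sum {ι : Type*} (s : Finset ι) (F : ι → EuclideanSpace ℝ (Fin n) → ℝ)
    (h : ∀ i ∈ s, DifferentiableAt ℝ (F i) x) (a : Fin n) :
    pd (fun y => ∑ i ∈ s, F i y) x a = ∑ i ∈ s, pd (F i) x a := by
  unfold pd
  rw [fderiv_fun_sum h]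
  simp

lemma pd_div_const (hf : DifferentiableAt ℝ f x) (c : ℝ) (a : Fin n) :
    pd (fun y => f y / c) x a = pd f x a / c := by
  simp only [div_eq_mul_inv]
  unfold pd
  rw [fderiv_mul_const hf]
  simp
  ring

lemma pd_mul_const (c : ℝ) (a : Fin n) (hf : DifferentiableAt ℝ f x) :
    pd (fun y => f y * c) x a = pd f x a * c := by
  unfold pd
  rw [fderiv_mul_const hf]
  simp
  ring

lemma pd_sq (hf : DifferentiableAt ℝ f x) (a : Fin n) :
    pd (fun y => f y ^ 2) x a = 2 * f x * pd f x a := by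
  have : (fun y => f y ^ 2) = fun y => f y * f y := by ext y; ring
  rw [this, pd_mul hf hf]; ring

lemma pd2_swap (hΩ : IsOpen Ω) (hu : ContDiffOn ℝ (⊤ : ℕ∞) u Ω) (hx : x ∈ Ω) (a b : Fin n) :
    pd2 u x a b = pd2 u x b a := by
  have hat : ContDiffAt ℝ (⊤ : ℕ∞) u x := hu.contDiffAt (hΩ.mem_nhds hx)
  have hsym : IsSymmSndFDerivAt ℝ u x :=
    hat.isSymmSndFDerivAt (by simp; exact WithTop.coe_le_coe.mpr le_top)
  have hd : DifferentiableAt ℝ (fderiv ℝ u) x :=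
    (hat.fderiv_right (m := (⊤ : ℕ∞)) (le_of_eq rfl)).differentiableAt (by simp)
  have key : ∀ v w : EuclideanSpace ℝ (Fin n),
      fderiv ℝ (fun y => fderiv ℝ u y w) x v = fderiv ℝ (fderiv ℝ u) x v w := by
    intro v w
    rw [fderiv_clm_apply hd (differentiableAt_const w)]
    simp
  unfold pd2 pd
  rw [key, key, hsym.eq]

lemma smooth_pd2 (hΩ : IsOpen Ω) (hu : ContDiffOn ℝ (⊤ : ℕ∞) u Ω) (a b : Fin n) :
    ContDiffOn ℝ (⊤ : ℕ∞) (fun y => pd2 u y a b) Ω :=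
  smooth_pd hΩ (smooth_pd hΩ hu b) a

lemma smooth_pd3 (hΩ : IsOpen Ω) (hu : ContDiffOn ℝ (⊤ : ℕ∞) u Ω) (a b c : Fin n) :
    ContDiffOn ℝ (⊤ : ℕ∞) (fun y => pd3 u y a b c) Ω :=
  smooth_pd hΩ (smooth_pd2 hΩ hu b c) a

lemma pd3_eq (a b c : Fin n) : pd (fun y => pd2 u y b c) x a = pd3 u x a b c := rfl

/-- Fourth-order partial derivative. -/
noncomputable def pd4 {n : ℕ} (u : EuclideanSpace ℝ (Fin n) → ℝ)
    (x : EuclideanSpace ℝ (Fin n)) (a b c d : Fin n) : ℝ :=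
  pd (fun y => pd3 u y b c d) x a

lemma pd3_swap12 (hΩ : IsOpen Ω) (hu : ContDiffOn ℝ (⊤ : ℕ∞) u Ω) (hx : x ∈ Ω)
    (a b c : Fin n) : pd3 u x a b c = pd3 u x b a c :=
  pd2_swap hΩ (smooth_pd hΩ hu c) hx a b

lemma pd3_swap23 (hΩ : IsOpen Ω) (hu : ContDiffOn ℝ (⊤ : ℕ∞) u Ω) (hx : x ∈ Ω)
    (a b c : Fin n) : pd3 u x a b c = pd3 u x a c b :=
  pd_congr hΩ hx (fun y hy => pd2_swap hΩ hu hy b c) a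

lemma pd4_swap12 (hΩ : IsOpen Ω) (hu : ContDiffOn ℝ (⊤ : ℕ∞) u Ω) (hx : x ∈ Ω)
    (a b c d : Fin n) : pd4 u x a b c d = pd4 u x b a c d :=
  pd2_swap hΩ (smooth_pd2 hΩ hu c d) hx a b

lemma pd4_swap23 (hΩ : IsOpen Ω) (hu : ContDiffOn ℝ (⊤ : ℕ∞) u Ω) (hx : x ∈ Ω)
    (a b c d : Fin n) : pd4 u x a b c d = pd4 u x a c b d :=
  pd_congr hΩ hx (fun y hy => pd3_swap12 hΩ hu hy b c d) a

lemma pd4_swap34 (hΩ : IsOpen Ω) (hu : ContDiffOn ℝ (⊤ : ℕ∞) u Ω) (hx : x ∈ Ω)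
    (a b c d : Fin n) : pd4 u x a b c d = pd4 u x a b d c :=
  pd_congr hΩ hx (fun y hy => pd3_swap23 hΩ hu hy b c d) a

lemma pd4_perm (hΩ : IsOpen Ω) (hu : ContDiffOn ℝ (⊤ : ℕ∞) u Ω) (hx : x ∈ Ω)
    (a b c d : Fin n) : pd4 u x a b c d = pd4 u x c d a b := by
  rw [pd4_swap23 hΩ hu hx, pd4_swap12 hΩ hu hx, pd4_swap34 hΩ hu hx, pd4_swap23 hΩ hu hx]

lemma pd2pd2_eq_pd4 (i j α β : Fin n) :
    pd2 (fun y => pd2 u y i j) x α β = pd4 u x α β i j := rfl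

end Aux
section Steps

variable {n : ℕ} {Ω : Set (EuclideanSpace ℝ (Fin n))}
  {u : EuclideanSpace ℝ (Fin n) → ℝ} {x : EuclideanSpace ℝ (Fin n)}

lemma step1 (hΩ : IsOpen Ω) (hu : ContDiffOn ℝ (⊤ : ℕ∞) u Ω)
    (heq : ∀ y ∈ Ω, sigma2M (hess u y) = 1) (hx : x ∈ Ω) (j : Fin n) :
    ∑ α, ∑ β, Fcoef u x α β * pd3 u x j α β = 0 := by
  have d2 : ∀ (y) (_ : y ∈ Ω) (a b : Fin n), DifferentiableAt ℝ (fun z => pd2 u z a b) y :=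
    fun y hy a b => dAt hΩ (smooth_pd2 hΩ hu a b) hy
  have dS : DifferentiableAt ℝ (fun y => ∑ k, pd2 u y k k) x :=
    DifferentiableAt.fun_sum fun k _ => d2 x hx k k
  have dQi : ∀ a : Fin n, DifferentiableAt ℝ (fun y => ∑ b, (pd2 u y a b)^2) x :=
    fun a => DifferentiableAt.fun_sum fun b _ => (d2 x hx a b).fun_pow 2
  have dQ : DifferentiableAt ℝ (fun y => ∑ a, ∑ b, (pd2 u y a b)^2) x :=
    DifferentiableAt.fun_sum fun a _ => dQi a
  have h0 : pd (fun y => ((∑ k, pd2 u y k k)^2 - ∑ a, ∑ b, (pd2 u y a b)^2)/2) x j = 0 := by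
    apply pd_const_on hΩ hx 1
    intro y hy
    simpa [sigma2M, hess] using heq y hy
  rw [pd_div_const ((dS.fun_pow 2).fun_sub dQ) 2,
      pd_sub (dS.fun_pow 2) dQ, pd_sq dS,
      pd_sum Finset.univ (fun k y => pd2 u y k k) (fun k _ => d2 x hx k k),
      pd_sum Finset.univ (fun a y => ∑ b, (pd2 u y a b)^2) (fun a _ => dQi a)] at h0
  have hQ : ∀ a : Fin n, pd (fun y => ∑ b, (pd2 u y a b)^2) x j
      = ∑ b, 2 * pd2 u x a b * pd3 u x j a b := by
    intro a
    rw [pd_sum Finset.univ (fun b y => (pd2 u y a b)^2) (fun b _ => (d2 x hx a b).fun_pow 2)]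
    exact Finset.sum_congr rfl fun b _ => by rw [pd_sq (d2 x hx a b), pd3_eq]
  rw [Finset.sum_congr rfl (fun a _ => hQ a)] at h0
  simp only [pd3_eq] at h0
  have key : (∑ k, pd2 u x k k) * (∑ k, pd3 u x j k k)
      = ∑ a, ∑ b, pd2 u x a b * pd3 u x j a b := by
    have h2 : ∑ a, ∑ b, 2 * pd2 u x a b * pd3 u x j a b
        = 2 * ∑ a, ∑ b, pd2 u x a b * pd3 u x j a b := by
      simp [Finset.mul_sum, mul_assoc]
    rw [h2] at h0
    field_simp at h0
    linarith
  calc ∑ α, ∑ β, Fcoef u x α β * pd3 u x j α β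
      = ∑ α, ∑ β, ((if α = β then (∑ k, pd2 u x k k) * pd3 u x j α β else 0)
          - pd2 u x α β * pd3 u x j α β) := by
        refine Finset.sum_congr rfl fun α _ => Finset.sum_congr rfl fun β _ => ?_
        unfold Fcoef
        by_cases h : α = β <;> simp [h] <;> ring
    _ = (∑ k, pd2 u x k k) * (∑ k, pd3 u x j k k)
          - ∑ a, ∑ b, pd2 u x a b * pd3 u x j a b := by
        simp only [Finset.sum_sub_distrib]
        congr 1
        rw [Finset.mul_sum]
        exact Finset.sum_congr rfl fun α _ => by simp [Finset.sum_ite_eq]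
    _ = 0 := by rw [key]; ring

lemma step2 (hΩ : IsOpen Ω) (hu : ContDiffOn ℝ (⊤ : ℕ∞) u Ω)
    (heq : ∀ y ∈ Ω, sigma2M (hess u y) = 1) (hx : x ∈ Ω) (i j : Fin n) :
    ∑ α, ∑ β, Fcoef u x α β * pd4 u x i j α β
      = (∑ α, ∑ β, pd3 u x i α β * pd3 u x j α β)
        - (∑ k, pd3 u x i k k) * (∑ k, pd3 u x j k k) := by
  have d2 : ∀ (y) (_ : y ∈ Ω) (a b : Fin n), DifferentiableAt ℝ (fun z => pd2 u z a b) y :=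
    fun y hy a b => dAt hΩ (smooth_pd2 hΩ hu a b) hy
  have d3 : ∀ (y) (_ : y ∈ Ω) (a b c : Fin n), DifferentiableAt ℝ (fun z => pd3 u z a b c) y :=
    fun y hy a b c => dAt hΩ (smooth_pd3 hΩ hu a b c) hy
  have hFdef : ∀ α β : Fin n, (fun z => Fcoef u z α β)
      = fun z => (∑ k, pd2 u z k k) * (if α = β then (1:ℝ) else 0) - pd2 u z α β := fun α β => rfl
  have dF : ∀ (y) (_ : y ∈ Ω) (α β : Fin n), DifferentiableAt ℝ (fun z => Fcoef u z α β) y := by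
    intro y hy α β
    rw [hFdef α β]
    exact ((DifferentiableAt.fun_sum fun k _ => d2 y hy k k).mul_const _).fun_sub (d2 y hy α β)
  have h0 : pd (fun y => ∑ α, ∑ β, Fcoef u y α β * pd3 u y j α β) x i = 0 := by
    apply pd_const_on hΩ hx 0
    intro y hy; exact step1 hΩ hu heq hy j
  rw [pd_sum Finset.univ (fun α y => ∑ β, Fcoef u y α β * pd3 u y j α β)
      (fun α _ => DifferentiableAt.fun_sum fun β _ => (dF x hx α β).fun_mul (d3 x hx j α β))] at h0
  have hinner : ∀ α : Fin n, pd (fun y => ∑ β, Fcoef u y α β * pd3 u y j α β) x i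
      = ∑ β, (((∑ k, pd3 u x i k k) * (if α = β then 1 else 0) - pd3 u x i α β) * pd3 u x j α β
        + Fcoef u x α β * pd4 u x i j α β) := by
    intro α
    rw [pd_sum Finset.univ (fun β y => Fcoef u y α β * pd3 u y j α β)
      (fun β _ => (dF x hx α β).fun_mul (d3 x hx j α β))]
    refine Finset.sum_congr rfl fun β _ => ?_
    rw [pd_mul (dF x hx α β) (d3 x hx j α β)]
    have hF : pd (fun y => Fcoef u y α β) x i
        = (∑ k, pd3 u x i k k) * (if α = β then 1 else 0) - pd3 u x i α β := by
      rw [hFdef α β,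
        pd_sub ((DifferentiableAt.fun_sum fun k _ => d2 x hx k k).mul_const _) (d2 x hx α β),
        pd_mul_const _ _ (DifferentiableAt.fun_sum fun k _ => d2 x hx k k),
        pd_sum Finset.univ (fun k y => pd2 u y k k) (fun k _ => d2 x hx k k)]
      simp only [pd3_eq]
    rw [hF]
    rfl
  rw [Finset.sum_congr rfl (fun α _ => hinner α)] at h0
  -- h0 : ∑α∑β (A αβ + Fcoef*pd4) = 0
  have hA : ∑ α, ∑ β, ((∑ k, pd3 u x i k k) * (if α = β then 1 else 0) - pd3 u x i α β)
        * pd3 u x j α β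
      = (∑ k, pd3 u x i k k) * (∑ k, pd3 u x j k k)
        - ∑ α, ∑ β, pd3 u x i α β * pd3 u x j α β := by
    have : ∀ α β : Fin n, ((∑ k, pd3 u x i k k) * (if α = β then 1 else 0) - pd3 u x i α β)
          * pd3 u x j α β
        = (if α = β then (∑ k, pd3 u x i k k) * pd3 u x j α β else 0)
          - pd3 u x i α β * pd3 u x j α β := by
      intro α β
      by_cases h : α = β <;> simp [h] <;> ring
    simp only [this, Finset.sum_sub_distrib]
    congr 1
    rw [Finset.mul_sum]
    exact Finset.sum_congr rfl fun α _ => by simp [Finset.sum_ite_eq]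
  have hsplit : ∑ α, ∑ β, (((∑ k, pd3 u x i k k) * (if α = β then 1 else 0) - pd3 u x i α β)
        * pd3 u x j α β + Fcoef u x α β * pd4 u x i j α β)
      = (∑ α, ∑ β, ((∑ k, pd3 u x i k k) * (if α = β then 1 else 0) - pd3 u x i α β)
          * pd3 u x j α β)
        + ∑ α, ∑ β, Fcoef u x α β * pd4 u x i j α β := by
    simp [Finset.sum_add_distrib]
  rw [hsplit, hA] at h0
  linarith

end Steps
/-- Equation satisfied by second derivatives of a solution of the sigma-2 equation. -/
theorem sigma2_second_derivative_equation
    (n : ℕ) (Ω : Set (EuclideanSpace ℝ (Fin n))) (hΩ : IsOpen Ω)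
    (u : EuclideanSpace ℝ (Fin n) → ℝ) (hu : ContDiffOn ℝ (⊤ : ℕ∞) u Ω)
    (heq : ∀ x ∈ Ω, sigma2M (hess u x) = 1) :
    ∀ i j : Fin n, ∀ x ∈ Ω,
      ∑ α, ∑ β, Fcoef u x α β * pd2 (fun y => pd2 u y i j) x α β
        = ∑ α, ∑ β, if α ≠ β then
            pd3 u x i α β * pd3 u x j α β - pd3 u x i β β * pd3 u x j α α
          else 0 := by
  intro i j x hx
  have hperm : ∀ α β : Fin n, pd2 (fun y => pd2 u y i j) x α β = pd4 u x i j α β := by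
    intro α β
    rw [pd2pd2_eq_pd4, pd4_perm hΩ hu hx]
  calc ∑ α, ∑ β, Fcoef u x α β * pd2 (fun y => pd2 u y i j) x α β
      = ∑ α, ∑ β, Fcoef u x α β * pd4 u x i j α β :=
        Finset.sum_congr rfl fun α _ => Finset.sum_congr rfl fun β _ => by rw [hperm]
    _ = (∑ α, ∑ β, pd3 u x i α β * pd3 u x j α β)
        - (∑ k, pd3 u x i k k) * (∑ k, pd3 u x j k k) := step2 hΩ hu heq hx i j
    _ = ∑ α, ∑ β, (if α ≠ β then
          pd3 u x i α β * pd3 u x j α β - pd3 u x i β β * pd3 u x j α α else 0) := by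
      have key : ∀ α β : Fin n, (if α ≠ β then
            pd3 u x i α β * pd3 u x j α β - pd3 u x i β β * pd3 u x j α α else 0)
          = pd3 u x i α β * pd3 u x j α β - pd3 u x i β β * pd3 u x j α α := by
        intro α β
        by_cases h : α = β
        · subst h; simp
        · simp [h]
      simp only [key, Finset.sum_sub_distrib]
      congr 1
      rw [Finset.sum_mul_sum, Finset.sum_comm]
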